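/- Hardy's relation: the Euler–Gompertz constant δ = ∫₀^∞ ln(t+1) e^{-t} dt satisfies δ = e·(-γ + ∑_{k=1}^∞ (-1)^{k+1}/(k·k!)), where γ is the Euler–Mascheroni constant. -/

import Mathlib

open MeasureTheory Real Set Filter

private lemma log_bound {x : ℝ} (hx : 0 < x) (hx1 : x ≤ 1) :
    |Real.log x| ≤ 2 * x ^ (-(1/2) : ℝ) := by
  rw [abs_of_nonpos (Real.log_nonpos hx.le hx1)]
  have h := Real.log_le_sub_one_of_pos (Real.rpow_pos_of_pos hx (-(1/2)))
  rw [Real.log_rpow hx] at h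
  nlinarith [Real.rpow_pos_of_pos hx (-(1/2) : ℝ)]

private lemma intOn_bound : IntegrableOn (fun x : ℝ => 2 * x ^ (-(1/2) : ℝ)) (Ioc 0 1) := by
  exact ((intervalIntegrable_iff_integrableOn_Ioc_of_le zero_le_one).mp
    (intervalIntegral.intervalIntegrable_rpow' (by norm_num))).const_mul 2

private lemma intOn_pow_log (n : ℕ) :
    IntegrableOn (fun x : ℝ => x ^ n * Real.log x) (Ioc 0 1) := by
  refine Integrable.mono intOn_bound ?_ ?_
  · refine ((continuousOn_pow n).mul (Real.continuousOn_log.mono ?_)).aestronglyMeasurable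
      measurableSet_Ioc
    intro x hx
    exact hx.1.ne'
  · rw [ae_restrict_iff' measurableSet_Ioc]
    refine ae_of_all _ fun x hx => ?_
    have h1 : |x ^ n * Real.log x| ≤ |Real.log x| := by
      rw [abs_mul, abs_of_nonneg (pow_nonneg hx.1.le n)]
      nlinarith [pow_le_one₀ hx.1.le hx.2 (n := n), abs_nonneg (Real.log x)]
    have h2 := log_bound hx.1 hx.2
    have h3 : (0:ℝ) ≤ 2 * x ^ (-(1/2) : ℝ) :=
      mul_nonneg (by norm_num) (Real.rpow_nonneg hx.1.le _)
    simp only [Real.norm_eq_abs]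
    rw [abs_of_nonneg h3]
    linarith

private lemma int_pow_log (n : ℕ) :
    ∫ x in Ioc (0:ℝ) 1, x ^ n * Real.log x = -(1 / ((n:ℝ) + 1) ^ 2) := by
  rw [← intervalIntegral.integral_of_le zero_le_one]
  have hc0 : ((n:ℝ) + 1) ≠ 0 := by positivity
  have key := intervalIntegral.integral_eq_sub_of_hasDerivAt_of_tendsto
    (f := fun x : ℝ => x ^ (n+1) * Real.log x / ((n:ℝ)+1) - x ^ (n+1) / ((n:ℝ)+1) ^ 2)
    (f' := fun x : ℝ => x ^ n * Real.log x) (a := 0) (b := 1) one_pos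
    (fa := 0) (fb := -(1 / ((n:ℝ) + 1) ^ 2)) ?_ ?_ ?_ ?_
  · rw [key]; ring
  · intro x hx
    have h1 : HasDerivAt (fun x : ℝ => x ^ (n+1)) (((n:ℝ)+1) * x ^ n) x := by
      simpa using hasDerivAt_pow (n+1) x
    have h2 : HasDerivAt Real.log x⁻¹ x := Real.hasDerivAt_log hx.1.ne'
    have := ((h1.mul h2).div_const ((n:ℝ)+1)).sub (h1.div_const (((n:ℝ)+1) ^ 2))
    convert this using 1
    · rfl
    field_simp [hx.1.ne']
    ring
  · exact (intervalIntegrable_iff_integrableOn_Ioc_of_le zero_le_one).mpr (intOn_pow_log n)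
  · have t1 : Tendsto (fun x : ℝ => Real.log x * x ^ (((n:ℝ))+1)) (nhdsWithin 0 (Ioi 0))
        (nhds 0) := tendsto_log_mul_rpow_nhdsGT_zero (by positivity)
    have t1' : Tendsto (fun x : ℝ => x ^ (n+1) * Real.log x) (nhdsWithin 0 (Ioi 0)) (nhds 0) := by
      refine t1.congr' ?_
      filter_upwards [self_mem_nhdsWithin] with x hx
      rw [show (((n:ℝ))+1) = ((n+1 : ℕ) : ℝ) by push_cast; ring,
        Real.rpow_natCast]
      ring
    have t2 : Tendsto (fun x : ℝ => x ^ (n+1)) (nhdsWithin 0 (Ioi 0)) (nhds 0) := by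
      have := ((continuous_pow (n+1)).tendsto (0:ℝ)).mono_left
        (nhdsWithin_le_nhds (s := Ioi (0:ℝ)))
      simpa using this
    have := (t1'.div_const ((n:ℝ)+1)).sub (t2.div_const (((n:ℝ)+1) ^ 2))
    simpa using this
  · have : ContinuousAt (fun x : ℝ => x ^ (n+1) * Real.log x / ((n:ℝ)+1)
        - x ^ (n+1) / ((n:ℝ)+1) ^ 2) 1 := by
      have hlog : ContinuousAt Real.log 1 := Real.continuousAt_log one_ne_zero
      fun_prop (disch := norm_num)
    have := this.tendsto.mono_left (nhdsWithin_le_nhds (s := Iio (1:ℝ)))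
    simpa using this

private lemma int_log_exp_Ioc :
    ∫ x in Ioc (0:ℝ) 1, Real.log x * Real.exp (-x)
      = ∑' n : ℕ, ((-1:ℝ) ^ n / (n.factorial : ℝ)) * -(1 / ((n:ℝ) + 1) ^ 2) := by
  have hF_int : ∀ n : ℕ, Integrable
      (fun x : ℝ => ((-1:ℝ) ^ n / (n.factorial : ℝ)) * (x ^ n * Real.log x))
      (volume.restrict (Ioc (0:ℝ) 1)) := fun n => (intOn_pow_log n).const_mul _
  have hfac : ∀ n : ℕ, ((n.factorial : ℝ)) ≠ 0 := fun n => by positivity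
  have hF_sum : Summable fun n : ℕ =>
      ∫ x, ‖((-1:ℝ) ^ n / (n.factorial : ℝ)) * (x ^ n * Real.log x)‖
        ∂(volume.restrict (Ioc (0:ℝ) 1)) := by
    set K : ℝ := ∫ x in Ioc (0:ℝ) 1, 2 * x ^ (-(1/2) : ℝ) with hK
    refine Summable.of_nonneg_of_le (fun n => integral_nonneg fun a => norm_nonneg _)
      (fun n => ?_) ((Real.summable_pow_div_factorial 1).mul_left K)
    have hle : ∀ x ∈ Ioc (0:ℝ) 1,
        ‖((-1:ℝ) ^ n / (n.factorial : ℝ)) * (x ^ n * Real.log x)‖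
          ≤ (1 / (n.factorial : ℝ)) * (2 * x ^ (-(1/2) : ℝ)) := by
      intro x hx
      rw [norm_mul, norm_div, norm_pow]
      simp only [norm_neg, norm_one, one_pow, Real.norm_eq_abs, Nat.abs_cast]
      rw [abs_mul, abs_of_nonneg (pow_nonneg hx.1.le n)]
      have h1 : x ^ n * |Real.log x| ≤ |Real.log x| := by
        nlinarith [pow_le_one₀ hx.1.le hx.2 (n := n), abs_nonneg (Real.log x),
          pow_nonneg hx.1.le n]
      have h2 := log_bound hx.1 hx.2
      have h3 : (0:ℝ) < (n.factorial : ℝ) := by positivity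
      rw [div_mul_eq_mul_div, div_mul_eq_mul_div, div_le_div_iff_of_pos_right h3, one_mul]
      calc x ^ n * |Real.log x| ≤ |Real.log x| := h1
        _ ≤ 2 * x ^ (-(1/2) : ℝ) := h2
        _ = 1 * (2 * x ^ (-(1/2) : ℝ)) := by ring
    calc ∫ x, ‖((-1:ℝ) ^ n / (n.factorial : ℝ)) * (x ^ n * Real.log x)‖
          ∂(volume.restrict (Ioc (0:ℝ) 1))
        ≤ ∫ x in Ioc (0:ℝ) 1, (1 / (n.factorial : ℝ)) * (2 * x ^ (-(1/2) : ℝ)) := by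
          refine setIntegral_mono_on (hF_int n).norm (intOn_bound.const_mul _)
            measurableSet_Ioc hle
      _ = K * (1 ^ n / (n.factorial : ℝ)) := by
          rw [integral_const_mul, one_pow, hK]; ring
  have key := MeasureTheory.integral_tsum_of_summable_integral_norm hF_int hF_sum
  have hRHS : (∫ x, (∑' n : ℕ, ((-1:ℝ) ^ n / (n.factorial : ℝ)) * (x ^ n * Real.log x))
      ∂(volume.restrict (Ioc (0:ℝ) 1))) = ∫ x in Ioc (0:ℝ) 1, Real.log x * Real.exp (-x) := by
    refine integral_congr_ae (ae_of_all _ fun x => ?_)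
    show (∑' n : ℕ, ((-1:ℝ) ^ n / (n.factorial : ℝ)) * (x ^ n * Real.log x))
      = Real.log x * Real.exp (-x)
    have h1 : ∀ n : ℕ, ((-1:ℝ) ^ n / (n.factorial : ℝ)) * (x ^ n * Real.log x)
        = Real.log x * ((-x) ^ n / (n.factorial : ℝ)) := by
      intro n; rw [neg_pow]; ring
    rw [tsum_congr h1, tsum_mul_left]
    congr 1
    rw [Real.exp_eq_exp_ℝ, NormedSpace.exp_eq_tsum_div]
  rw [← hRHS, ← key]
  refine tsum_congr fun n => ?_
  rw [integral_const_mul]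
  congr 1
  exact int_pow_log n

private lemma int_log_exp_Ioi :
    ∫ x in Ioi (0:ℝ), Real.log x * Real.exp (-x) = -Real.eulerMascheroniConstant := by
  have h1 := Complex.hasDerivAt_GammaIntegral (s := 1) (by norm_num)
  have hD : (∫ t in Ioi (0:ℝ), (t:ℂ) ^ ((1:ℂ) - 1) * ((Real.log t : ℂ) * ((Real.exp (-t) : ℝ) : ℂ)))
      = ((∫ x in Ioi (0:ℝ), Real.log x * Real.exp (-x) : ℝ) : ℂ) := by
    refine Eq.trans (setIntegral_congr_fun measurableSet_Ioi fun t ht => ?_) integral_ofReal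
    rw [sub_self, Complex.cpow_zero, one_mul]
    push_cast
    simp [Complex.ofReal_exp]
  rw [hD] at h1
  have h2 := h1.comp_ofReal
  have h3 : HasDerivAt (fun x : ℝ => ((Real.Gamma x : ℝ) : ℂ))
      (((∫ x in Ioi (0:ℝ), Real.log x * Real.exp (-x) : ℝ) : ℂ)) 1 := by
    refine h2.congr_of_eventuallyEq ?_
    filter_upwards [eventually_gt_nhds one_pos] with x hx
    rw [Real.Gamma_eq_integral hx, ← Complex.GammaIntegral_ofReal]
  have h4 := Real.hasDerivAt_Gamma_one.ofReal_comp
  have h5 := h3.unique h4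
  exact_mod_cast h5

private lemma intOn_g_Ioc : IntegrableOn (fun x : ℝ => Real.log x * Real.exp (-x)) (Ioc 0 1) := by
  refine Integrable.mono intOn_bound ?_ ?_
  · refine ((Real.continuousOn_log.mono ?_).mul
      (Real.continuous_exp.comp continuous_neg).continuousOn).aestronglyMeasurable
      measurableSet_Ioc
    intro x hx; exact hx.1.ne'
  · rw [ae_restrict_iff' measurableSet_Ioc]
    refine ae_of_all _ fun x hx => ?_
    have h2 := log_bound hx.1 hx.2
    have hexp : Real.exp (-x) ≤ 1 := Real.exp_le_one_iff.mpr (by linarith [hx.1])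
    have h3 : (0:ℝ) ≤ 2 * x ^ (-(1/2) : ℝ) :=
      mul_nonneg (by norm_num) (Real.rpow_nonneg hx.1.le _)
    simp only [Real.norm_eq_abs]
    rw [abs_of_nonneg h3, abs_mul, abs_of_nonneg (Real.exp_nonneg _)]
    nlinarith [abs_nonneg (Real.log x), Real.exp_nonneg (-x)]

private lemma intOn_g_Ioi : IntegrableOn (fun x : ℝ => Real.log x * Real.exp (-x)) (Ioi 1) := by
  have hbig := (Real.GammaIntegral_convergent (by norm_num : (0:ℝ) < 2)).mono_set
    (Ioi_subset_Ioi zero_le_one)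
  refine Integrable.mono hbig ?_ ?_
  · refine ((Real.continuousOn_log.mono ?_).mul
      (Real.continuous_exp.comp continuous_neg).continuousOn).aestronglyMeasurable
      measurableSet_Ioi
    intro x hx
    simp only [mem_compl_iff, mem_singleton_iff]
    exact (lt_trans zero_lt_one hx).ne'
  · rw [ae_restrict_iff' measurableSet_Ioi]
    refine ae_of_all _ fun x hx => ?_
    have hx1 : (1:ℝ) < x := hx
    have hlog : Real.log x ≤ x := (Real.log_le_sub_one_of_pos (by linarith)).trans (by linarith)
    have hlog0 : 0 ≤ Real.log x := Real.log_nonneg hx1.le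
    have hr : x ^ ((2:ℝ) - 1) = x := by norm_num
    simp only [Real.norm_eq_abs]
    have hpos : (0:ℝ) ≤ Real.exp (-x) * x ^ ((2:ℝ) - 1) :=
      mul_nonneg (Real.exp_nonneg _) (Real.rpow_nonneg (by linarith) _)
    rw [abs_mul, abs_of_nonneg hlog0, abs_of_nonneg (Real.exp_nonneg _),
      abs_of_nonneg hpos, hr]
    nlinarith [Real.exp_nonneg (-x)]

theorem hardy_relation :
    ∫ t in Set.Ioi (0 : ℝ), Real.log (t + 1) * exp (-t)
      = exp 1 * (-Real.eulerMascheroniConstant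
          + ∑' k : ℕ, (-1 : ℝ) ^ ((k + 1) + 1) / ((k + 1) * (Nat.factorial (k + 1) : ℝ))) := by
  have himg : ((fun x : ℝ => x + 1) '' Ioi (0:ℝ)) = Ioi 1 := by
    ext x
    simp only [mem_image, mem_Ioi]
    constructor
    · rintro ⟨y, hy, rfl⟩; linarith
    · intro hx; exact ⟨x - 1, by linarith, by ring⟩
  have hsub : (∫ t in Ioi (0:ℝ), Real.log (t + 1) * Real.exp (-t))
      = Real.exp 1 * ∫ x in Ioi (1:ℝ), Real.log x * Real.exp (-x) := by
    rw [← integral_const_mul, ← himg,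
      MeasurePreserving.setIntegral_image_emb (measurePreserving_add_right volume 1)
        (measurableEmbedding_addRight 1)]
    refine setIntegral_congr_fun measurableSet_Ioi fun t ht => ?_
    have he : Real.exp 1 * Real.exp (-(t+1)) = Real.exp (-t) := by
      rw [← Real.exp_add]; ring_nf
    calc Real.log (t + 1) * Real.exp (-t)
        = Real.log (t+1) * (Real.exp 1 * Real.exp (-(t+1))) := by rw [he]
      _ = Real.exp 1 * (Real.log (t + 1) * Real.exp (-(t + 1))) := by ring
  have hdisj : Disjoint (Ioc (0:ℝ) 1) (Ioi 1) :=
    Set.disjoint_left.mpr fun x hx hx' => absurd hx.2 (not_le.mpr hx')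
  have hsplit : (∫ x in Ioi (0:ℝ), Real.log x * Real.exp (-x))
      = (∫ x in Ioc (0:ℝ) 1, Real.log x * Real.exp (-x))
        + ∫ x in Ioi (1:ℝ), Real.log x * Real.exp (-x) := by
    rw [← setIntegral_union hdisj measurableSet_Ioi intOn_g_Ioc intOn_g_Ioi,
      Ioc_union_Ioi_eq_Ioi zero_le_one]
  rw [hsub]
  have h1 : (∫ x in Ioi (1:ℝ), Real.log x * Real.exp (-x))
      = -Real.eulerMascheroniConstant
        - ∫ x in Ioc (0:ℝ) 1, Real.log x * Real.exp (-x) := by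
    rw [eq_sub_iff_add_eq, add_comm, ← hsplit, int_log_exp_Ioi]
  rw [h1, int_log_exp_Ioc]
  congr 1
  rw [sub_eq_add_neg, ← tsum_neg]
  congr 1
  refine tsum_congr fun k => ?_
  have hf : ((k.factorial : ℝ)) ≠ 0 := by positivity
  have hk1 : ((k:ℝ) + 1) ≠ 0 := by positivity
  rw [Nat.factorial_succ]
  push_cast
  field_simp
  ring
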